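/- arXiv:1710.03896 — 5 statements merged into one kernel-verified Lean document; each statement's English description precedes it below -/
import Mathlib

section
/- For every n \geq 1 and every position 1 \leq i \leq 2n-1, the number of matchings \pi \in S_{2n} with a descent at position i (i.e. \pi(i) > \pi(i+1)) equals \frac{n}{2n-1} (2n-1)!!, i.e. n \cdot (2n-3)!!. -/
open Finset

/-- A matching (fixed point free involution). -/
def IsMatching {m : ℕ} (π : Equiv.Perm (Fin m)) : Prop :=
  π * π = 1 ∧ ∀ i, π i ≠ i

instance {m : ℕ} (π : Equiv.Perm (Fin m)) : Decidable (IsMatching π) := by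
  unfold IsMatching; infer_instance

/-- The set of matchings in `S_{2n}`. -/
def matchings (n : ℕ) : Finset (Equiv.Perm (Fin (2 * n))) :=
  Finset.univ.filter IsMatching

/-- Descent set (0-based indices `i` with `π i > π (i+1)`). -/
def desSet {m : ℕ} (π : Equiv.Perm (Fin m)) : Finset (Fin m) :=
  Finset.univ.filter fun i =>
    if h : (i : ℕ) + 1 < m then π ⟨(i : ℕ) + 1, h⟩ < π i else False

/-- Descent number `d(π) = |Des(π)| + 1`. -/
def desNum {m : ℕ} (π : Equiv.Perm (Fin m)) : ℕ := (desSet π).card + 1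

/-- Major index: sum of the (1-based) descent positions. -/
def maj {m : ℕ} (π : Equiv.Perm (Fin m)) : ℕ := ∑ i ∈ desSet π, ((i : ℕ) + 1)

/-- The double factorial `(2n-1)!! = ∏_{i=1}^n (2i-1)`. -/
def doubleFac (n : ℕ) : ℕ := ∏ i ∈ Finset.range n, (2 * i + 1)

section Aux

open Equiv Equiv.Perm

lemma mem_matchings {n : ℕ} {π : Equiv.Perm (Fin (2*n))} :
    π ∈ matchings n ↔ IsMatching π := by
  simp [matchings]

lemma IsMatching.apply_apply {m : ℕ} {π : Equiv.Perm (Fin m)} (h : IsMatching π) (x : Fin m) :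
    π (π x) = x := by
  have := DFunLike.congr_fun h.1 x
  simpa [Equiv.Perm.mul_apply] using this

lemma card_pair (n : ℕ) (a b : Fin (2*(n+1))) (hab : a ≠ b) :
    ((matchings (n+1)).filter fun π => π a = b).card = (matchings n).card := by
  classical
  have hcard : Fintype.card {x : Fin (2*(n+1)) // x ≠ a ∧ x ≠ b} = 2*n := by
    rw [Fintype.card_subtype]
    have h2 : (Finset.univ.filter fun x : Fin (2*(n+1)) => x ≠ a ∧ x ≠ b)
        = Finset.univ \ {a, b} := by
      ext x; simp [not_or]
    rw [h2, Finset.card_sdiff_of_subset (Finset.subset_univ _), Finset.card_univ, Fintype.card_fin,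
      Finset.card_insert_of_notMem (by simpa using hab), Finset.card_singleton]
    omega
  let p : Fin (2*(n+1)) → Prop := fun x => x ≠ a ∧ x ≠ b
  let e : {x : Fin (2*(n+1)) // p x} ≃ Fin (2*n) := Fintype.equivFinOfCardEq hcard
  -- key facts for matchings with π a = b
  have key1 : ∀ (π : Equiv.Perm (Fin (2*(n+1)))), IsMatching π → π a = b →
      ∀ x, (π x = a ↔ x = b) := by
    intro π hπ hab' x
    constructor
    · intro h
      have := congrArg π h
      rwa [hπ.apply_apply, hab'] at this
    · rintro rfl
      have := congrArg π hab'
      rw [hπ.apply_apply] at this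
      exact this.symm
  have key2 : ∀ (π : Equiv.Perm (Fin (2*(n+1)))), IsMatching π → π a = b →
      ∀ x, (π x = b ↔ x = a) := by
    intro π hπ hab' x
    constructor
    · intro h
      have := congrArg π h
      rw [hπ.apply_apply] at this
      rw [this, ← hab', hπ.apply_apply]
    · rintro rfl; exact hab'
  have hiff : ∀ (π : Equiv.Perm (Fin (2*(n+1)))) (hπ : IsMatching π) (hab' : π a = b),
      ∀ x, p x ↔ p (π x) := by
    intro π hπ hab' x
    simp only [p, ne_eq, key1 π hπ hab', key2 π hπ hab']
    exact ⟨fun h => ⟨h.2, h.1⟩, fun h => ⟨h.2, h.1⟩⟩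
  refine Finset.card_bij'
    (fun π hπ => e.permCongr (π.subtypePerm
      (fun x => (hiff π (mem_matchings.mp (Finset.mem_filter.mp hπ).1) (Finset.mem_filter.mp hπ).2 x).symm)))
    (fun σ _ => Equiv.swap a b * Equiv.Perm.ofSubtype (e.symm.permCongr σ)) ?_ ?_ ?_ ?_
  · -- forward map lands in matchings n
    intro π hπ
    obtain ⟨hm, hfix⟩ := mem_matchings.mp (Finset.mem_filter.mp hπ).1
    rw [mem_matchings]
    constructor
    · ext y
      have hsq : ∀ x, π (π x) = x := fun x => by
        have := DFunLike.congr_fun hm x; simpa [Equiv.Perm.mul_apply] using this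
      simp [Equiv.Perm.mul_apply, Equiv.permCongr_apply, Equiv.Perm.subtypePerm_apply, hsq]
    · intro y hy
      simp only [Equiv.permCongr_apply, Equiv.Perm.subtypePerm_apply] at hy
      have := congrArg e.symm hy
      rw [Equiv.symm_apply_apply] at this
      have hv := congrArg Subtype.val this
      exact hfix _ hv
  · -- backward map lands in the filter
    intro σ hσ
    obtain ⟨hm, hfix⟩ := mem_matchings.mp hσ
    set ρ := e.symm.permCongr σ with hρ
    have hρsq : ρ * ρ = 1 := by
      rw [hρ]
      ext z
      have hsq : ∀ x, σ (σ x) = x := fun x => by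
        have := DFunLike.congr_fun hm x; simpa [Equiv.Perm.mul_apply] using this
      simp [Equiv.Perm.mul_apply, Equiv.permCongr_apply, hsq]
    have hoa : Equiv.Perm.ofSubtype ρ a = a :=
      Equiv.Perm.ofSubtype_apply_of_not_mem ρ (by simp [p])
    have hob : Equiv.Perm.ofSubtype ρ b = b :=
      Equiv.Perm.ofSubtype_apply_of_not_mem ρ (by simp [p])
    have hcomm : Equiv.swap a b * Equiv.Perm.ofSubtype ρ
        = Equiv.Perm.ofSubtype ρ * Equiv.swap a b := by
      ext x
      by_cases hxa : x = a
      · subst hxa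
        simp [Equiv.Perm.mul_apply, hoa, hob, Equiv.swap_apply_left]
      by_cases hxb : x = b
      · subst hxb
        simp [Equiv.Perm.mul_apply, hoa, hob, Equiv.swap_apply_right]
      · have hpx : p x := ⟨hxa, hxb⟩
        have hox : Equiv.Perm.ofSubtype ρ x = (ρ ⟨x, hpx⟩ : _) :=
          Equiv.Perm.ofSubtype_apply_of_mem ρ hpx
        have hppx : p (Equiv.Perm.ofSubtype ρ x) := by rw [hox]; exact (ρ ⟨x, hpx⟩).2
        simp only [Equiv.Perm.mul_apply]
        rw [Equiv.swap_apply_of_ne_of_ne hxa hxb,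
          Equiv.swap_apply_of_ne_of_ne hppx.1 hppx.2]
    rw [Finset.mem_filter, mem_matchings]
    have hsq2 : (Equiv.swap a b * Equiv.Perm.ofSubtype ρ) * (Equiv.swap a b * Equiv.Perm.ofSubtype ρ) = 1 := by
      have h1 : Equiv.swap a b * Equiv.swap a b = 1 := Equiv.swap_mul_self a b
      calc (Equiv.swap a b * Equiv.Perm.ofSubtype ρ) * (Equiv.swap a b * Equiv.Perm.ofSubtype ρ)
          = (Equiv.swap a b * Equiv.Perm.ofSubtype ρ) * (Equiv.Perm.ofSubtype ρ * Equiv.swap a b) := by rw [hcomm]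
        _ = Equiv.swap a b * (Equiv.Perm.ofSubtype ρ * Equiv.Perm.ofSubtype ρ) * Equiv.swap a b := by group
        _ = Equiv.swap a b * Equiv.Perm.ofSubtype (ρ * ρ) * Equiv.swap a b := by rw [map_mul]
        _ = 1 := by rw [hρsq, map_one, mul_one, h1]
    refine ⟨⟨hsq2, ?_⟩, ?_⟩
    · intro x
      by_cases hxa : x = a
      · subst hxa
        simp only [Equiv.Perm.mul_apply, hoa]
        rw [Equiv.swap_apply_left]; exact hab.symm
      by_cases hxb : x = b
      · subst hxb
        simp only [Equiv.Perm.mul_apply, hob]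
        rw [Equiv.swap_apply_right]; exact hab
      · have hpx : p x := ⟨hxa, hxb⟩
        have hox : Equiv.Perm.ofSubtype ρ x = (ρ ⟨x, hpx⟩ : _) :=
          Equiv.Perm.ofSubtype_apply_of_mem ρ hpx
        have hppx : p (Equiv.Perm.ofSubtype ρ x) := by rw [hox]; exact (ρ ⟨x, hpx⟩).2
        simp only [Equiv.Perm.mul_apply]
        rw [Equiv.swap_apply_of_ne_of_ne hppx.1 hppx.2, hox]
        intro h
        have : ρ ⟨x, hpx⟩ = ⟨x, hpx⟩ := Subtype.ext h
        have : σ (e ⟨x, hpx⟩) = e ⟨x, hpx⟩ := by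
          have := congrArg e this
          simpa [hρ, Equiv.permCongr_apply] using this
        exact hfix _ this
    · simp only [Equiv.Perm.mul_apply, hoa]
      exact Equiv.swap_apply_left a b
  · -- left inverse
    intro π hπ
    obtain ⟨hm', hab'⟩ := Finset.mem_filter.mp hπ
    have hmm := mem_matchings.mp hm'
    have hm := hmm.1
    have hfix := hmm.2
    have hba : π b = a := by
      have := congrArg π hab'
      rw [hmm.apply_apply] at this
      exact this.symm
    have hcancel : ∀ τ : Equiv.Perm {x : Fin (2*(n+1)) // p x},
        e.symm.permCongr (e.permCongr τ) = τ := by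
      intro τ; ext z; simp [Equiv.permCongr_apply]
    beta_reduce
    rw [hcancel]
    have hpa : ¬ p a := by simp [p]
    have hpb : ¬ p b := by simp [p]
    refine Equiv.ext fun x => ?_
    rw [Equiv.Perm.mul_apply]
    by_cases hxa : x = a
    · rw [hxa, Equiv.Perm.ofSubtype_apply_of_not_mem _ hpa, Equiv.swap_apply_left, hab']
    · by_cases hxb : x = b
      · rw [hxb, Equiv.Perm.ofSubtype_apply_of_not_mem _ hpb, Equiv.swap_apply_right, hba]
      · have hpx : p x := ⟨hxa, hxb⟩
        rw [Equiv.Perm.ofSubtype_apply_of_mem _ hpx]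
        have hppx : p (π x) := (hiff π hmm hab' x).mp hpx
        exact Equiv.swap_apply_of_ne_of_ne hppx.1 hppx.2
  · -- right inverse
    intro σ hσ
    refine Equiv.ext fun y => ?_
    beta_reduce
    rw [Equiv.permCongr_apply, Equiv.apply_eq_iff_eq_symm_apply]
    apply Subtype.ext
    show (Equiv.swap a b * Equiv.Perm.ofSubtype (e.symm.permCongr σ))
        ((e.symm y : {x : Fin (2*(n+1)) // p x}) : Fin (2*(n+1)))
      = ((e.symm (σ y) : {x : Fin (2*(n+1)) // p x}) : Fin (2*(n+1)))
    rw [Equiv.Perm.mul_apply, Equiv.Perm.ofSubtype_apply_of_mem _ (e.symm y).2]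
    have h5 : (e.symm.permCongr σ)
        ⟨((e.symm y : {x : Fin (2*(n+1)) // p x}) : Fin (2*(n+1))), (e.symm y).2⟩
        = e.symm (σ y) := by
      simp [Equiv.permCongr_apply]
    rw [h5]
    exact Equiv.swap_apply_of_ne_of_ne (e.symm (σ y)).2.1 (e.symm (σ y)).2.2

lemma card_matchings : ∀ n : ℕ, (matchings n).card = doubleFac n := by
  intro n
  induction n with
  | zero => rfl
  | succ n ih =>
    have h0 : (0 : ℕ) < 2*(n+1) := by omega
    set a : Fin (2*(n+1)) := ⟨0, h0⟩ with ha
    have h := Finset.card_eq_sum_card_fiberwise (s := matchings (n+1))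
      (t := Finset.univ.erase a) (f := fun π => π a) ?_
    · rw [h]
      have hc : ∀ b ∈ Finset.univ.erase a,
          ((matchings (n+1)).filter fun π => π a = b).card = (matchings n).card := by
        intro b hb
        exact card_pair n a b (Finset.mem_erase.mp hb).1.symm
      rw [Finset.sum_congr rfl hc, Finset.sum_const, smul_eq_mul,
        Finset.card_erase_of_mem (Finset.mem_univ a), Finset.card_univ, Fintype.card_fin, ih]
      have h21 : 2*(n+1) - 1 = 2*n+1 := by omega
      have hd : doubleFac (n+1) = doubleFac n * (2*n+1) := Finset.prod_range_succ (fun i => 2 * i + 1) n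
      rw [h21, hd, Nat.mul_comm]
    · intro π hπ
      exact Finset.mem_erase.mpr ⟨(mem_matchings.mp hπ).2 a, Finset.mem_univ _⟩

lemma conj_aux {m : ℕ} (a b : Fin m) (π : Equiv.Perm (Fin m))
    (hm : IsMatching π) (hne : π a ≠ b) :
    IsMatching (Equiv.swap a b * π * Equiv.swap a b) ∧
    (Equiv.swap a b * π * Equiv.swap a b) a = π b ∧
    (Equiv.swap a b * π * Equiv.swap a b) b = π a := by
  set t := Equiv.swap a b with htdef
  have ht : t * t = 1 := Equiv.swap_mul_self a b
  have hba : π b ≠ a := by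
    intro h
    have := congrArg π h
    rw [hm.apply_apply] at this
    exact hne this.symm
  refine ⟨⟨?_, ?_⟩, ?_, ?_⟩
  · have e1 : (t*π*t)*(t*π*t) = t*(π*((t*t)*(π*t))) := by group
    have e2 : t*(π*(π*t)) = t*((π*π)*t) := by group
    rw [e1, ht, one_mul, e2, hm.1, one_mul, ht]
  · intro x h
    simp only [Equiv.Perm.mul_apply] at h
    have h2 := congrArg t h
    rw [htdef, Equiv.swap_apply_self] at h2
    exact hm.2 _ h2
  · rw [Equiv.Perm.mul_apply, Equiv.Perm.mul_apply, htdef, Equiv.swap_apply_left]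
    exact Equiv.swap_apply_of_ne_of_ne hba (hm.2 b)
  · rw [Equiv.Perm.mul_apply, Equiv.Perm.mul_apply, htdef, Equiv.swap_apply_right]
    exact Equiv.swap_apply_of_ne_of_ne (hm.2 a) hne

end Aux

set_option maxHeartbeats 1000000 in
theorem stmt2 (n : ℕ) (hn : 1 ≤ n) (i : ℕ) (h1 : 1 ≤ i) (h2 : i ≤ 2 * n - 1) :
    ((matchings n).filter fun π =>
        π ⟨i, by omega⟩ < π ⟨i - 1, by omega⟩).card = n * doubleFac (n - 1) := by
  obtain ⟨m, rfl⟩ : ∃ m, n = m + 1 := ⟨n - 1, by omega⟩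
  have hia : i - 1 < 2 * (m+1) := by omega
  have hib : i < 2 * (m+1) := by omega
  show ((matchings (m+1)).filter fun π =>
      π ⟨i, hib⟩ < π ⟨i - 1, hia⟩).card = (m+1) * doubleFac (m+1-1)
  set a : Fin (2*(m+1)) := ⟨i - 1, hia⟩ with ha
  set b : Fin (2*(m+1)) := ⟨i, hib⟩ with hdefb
  have hab : a ≠ b := by
    intro h
    have := congrArg Fin.val h
    simp only [ha, hdefb] at this
    omega
  have haltb : a < b := by
    rw [Fin.lt_def]
    simp only [ha, hdefb]
    omega
  set M := matchings (m+1) with hM0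
  set D := M.filter (fun π => π b < π a) with hD
  set A := M.filter (fun π => ¬ π b < π a) with hA2
  set F := M.filter (fun π => π a = b) with hF0
  have hDA : D.card + A.card = M.card :=
    Finset.card_filter_add_card_filter_not
      (s := M) (fun π : Equiv.Perm (Fin (2*(m+1))) => π b < π a)
  have hDF : (D.filter fun π => π a = b) = F := by
    ext π
    simp only [hD, hF0, Finset.mem_filter, and_assoc]
    constructor
    · rintro ⟨h1, _, h3⟩; exact ⟨h1, h3⟩
    · rintro ⟨h1, h3⟩
      refine ⟨h1, ?_, h3⟩
      have hm := mem_matchings.mp h1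
      have hba : π b = a := by
        have := congrArg π h3
        rw [hm.apply_apply] at this
        exact this.symm
      rw [hba, h3]; exact haltb
  have hsplit : (D.filter fun π => π a = b).card + (D.filter fun π => ¬ π a = b).card
      = D.card := Finset.card_filter_add_card_filter_not
        (s := D) (fun π : Equiv.Perm (Fin (2*(m+1))) => π a = b)
  have hbij : (D.filter fun π => ¬ π a = b).card = A.card := by
    refine Finset.card_bij' (fun π _ => Equiv.swap a b * π * Equiv.swap a b)
      (fun π _ => Equiv.swap a b * π * Equiv.swap a b) ?_ ?_ ?_ ?_
    · intro π hπ
      rw [Finset.mem_filter, hD, Finset.mem_filter] at hπ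
      obtain ⟨⟨hmem, hdesc⟩, hne⟩ := hπ
      have hm := mem_matchings.mp hmem
      obtain ⟨hm2, hva, hvb⟩ := conj_aux a b π hm hne
      rw [hA2, Finset.mem_filter]
      refine ⟨mem_matchings.mpr hm2, ?_⟩
      rw [hva, hvb]
      exact not_lt.mpr (le_of_lt hdesc)
    · intro π hπ
      rw [hA2, Finset.mem_filter] at hπ
      obtain ⟨hmem, hnd⟩ := hπ
      have hm := mem_matchings.mp hmem
      have hne : π a ≠ b := by
        intro h
        have hba : π b = a := by
          have := congrArg π h
          rw [hm.apply_apply] at this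
          exact this.symm
        exact hnd (by rw [hba, h]; exact haltb)
      obtain ⟨hm2, hva, hvb⟩ := conj_aux a b π hm hne
      rw [Finset.mem_filter, hD, Finset.mem_filter]
      have hlt : π a < π b := by
        rcases lt_or_ge (π a) (π b) with h | h
        · exact h
        · rcases lt_or_eq_of_le h with h' | h'
          · exact absurd h' hnd
          · exact absurd (π.injective h') (Ne.symm hab)
      refine ⟨⟨mem_matchings.mpr hm2, ?_⟩, ?_⟩
      · rw [hva, hvb]; exact hlt
      · rw [hva]; exact hm.2 b
    · intro π hπ
      have ht : Equiv.swap a b * Equiv.swap a b = 1 := Equiv.swap_mul_self a b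
      have e1 : Equiv.swap a b * (Equiv.swap a b * π * Equiv.swap a b) * Equiv.swap a b
          = (Equiv.swap a b * Equiv.swap a b) * π * (Equiv.swap a b * Equiv.swap a b) := by
        group
      beta_reduce
      rw [e1, ht, one_mul, mul_one]
    · intro π hπ
      have ht : Equiv.swap a b * Equiv.swap a b = 1 := Equiv.swap_mul_self a b
      have e1 : Equiv.swap a b * (Equiv.swap a b * π * Equiv.swap a b) * Equiv.swap a b
          = (Equiv.swap a b * Equiv.swap a b) * π * (Equiv.swap a b * Equiv.swap a b) := by
        group
      beta_reduce
      rw [e1, ht, one_mul, mul_one]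
  have hF : F.card = doubleFac m := by
    rw [hF0, hM0, card_pair m a b hab, card_matchings]
  have hMc : M.card = doubleFac (m+1) := card_matchings (m+1)
  have hd : doubleFac (m+1) = doubleFac m * (2*m+1) := Finset.prod_range_succ (fun i => 2 * i + 1) m
  have key : 2 * D.card = doubleFac (m+1) + doubleFac m := by
    rw [hDF] at hsplit
    omega
  have h2 : doubleFac (m+1) + doubleFac m = 2 * ((m+1) * doubleFac m) := by
    rw [hd]; ring
  have h3 : D.card = (m+1) * doubleFac m := by
    have := key.trans h2
    exact Nat.eq_of_mul_eq_mul_left (by norm_num) this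
  simpa using h3
end

section
/- For n \geq 3 and adjacent positions i, i+1 with 1 \leq i \leq 2n-2, the number of matchings \pi \in S_{2n} having descents at both positions i and i+1 equals \frac{n+1}{3(2n-1)} (2n-1)!!. -/
open Finset Equiv

variable {m : ℕ}

def matchingsOn (s : Finset (Fin m)) : Finset (Equiv.Perm (Fin m)) :=
  univ.filter fun π => π * π = 1 ∧ (∀ i ∈ s, π i ≠ i) ∧ ∀ i ∉ s, π i = i

lemma mem_matchingsOn {s : Finset (Fin m)} {π : Equiv.Perm (Fin m)} :
    π ∈ matchingsOn s ↔ π * π = 1 ∧ (∀ i ∈ s, π i ≠ i) ∧ ∀ i ∉ s, π i = i := by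
  simp [matchingsOn]

lemma sq_apply {π : Equiv.Perm (Fin m)} (h : π * π = 1) (i : Fin m) : π (π i) = i := by
  have := Equiv.ext_iff.mp h i
  simpa [Equiv.Perm.mul_apply] using this

lemma apply_mem {s : Finset (Fin m)} {π : Equiv.Perm (Fin m)} (h : π ∈ matchingsOn s)
    {i : Fin m} (hi : i ∈ s) : π i ∈ s := by
  rw [mem_matchingsOn] at h
  by_contra hn
  have h1 : π (π i) = π i := h.2.2 _ hn
  have h2 : π (π i) = i := sq_apply h.1 i
  exact h.2.1 i hi (h1.symm.trans h2)

lemma comm_swap {π : Equiv.Perm (Fin m)} {a j : Fin m} (ha : π a = j) (hj : π j = a) :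
    Equiv.swap a j * π = π * Equiv.swap a j := by
  ext x
  simp only [Equiv.Perm.mul_apply]
  rcases eq_or_ne x a with rfl | hxa
  · rw [Equiv.swap_apply_left, hj, ha, Equiv.swap_apply_right]
  rcases eq_or_ne x j with rfl | hxj
  · rw [Equiv.swap_apply_right, ha, hj, Equiv.swap_apply_left]
  · rw [Equiv.swap_apply_of_ne_of_ne hxa hxj, Equiv.swap_apply_of_ne_of_ne]
    · intro h; exact hxj (π.injective (h.trans hj.symm))
    · intro h; exact hxa (π.injective (h.trans ha.symm))

lemma step (s : Finset (Fin m)) (a j : Fin m) (haj : a ≠ j) (ha : a ∈ s) (hj : j ∈ s)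
    (p : Equiv.Perm (Fin m) → Prop) [DecidablePred p] :
    ((matchingsOn s).filter fun π => π a = j ∧ p π).card
      = ((matchingsOn (s \ {a, j})).filter fun π => p (Equiv.swap a j * π)).card := by
  apply Finset.card_nbij' (fun π => Equiv.swap a j * π) (fun π => Equiv.swap a j * π)
  · -- forward membership
    intro π hπ
    simp only [Finset.mem_coe, Finset.mem_filter] at hπ ⊢
    obtain ⟨hm, haπ, hp⟩ := hπ
    rw [mem_matchingsOn] at hm
    obtain ⟨hsq, hfpf, hfix⟩ := hm
    have hja : π j = a := by rw [← haπ]; exact sq_apply hsq a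
    have hcomm := comm_swap haπ hja
    constructor
    · rw [mem_matchingsOn]
      refine ⟨?_, ?_, ?_⟩
      · calc (Equiv.swap a j * π) * (Equiv.swap a j * π)
            = Equiv.swap a j * (π * Equiv.swap a j) * π := by group
          _ = Equiv.swap a j * (Equiv.swap a j * π) * π := by rw [← hcomm]
          _ = (Equiv.swap a j * Equiv.swap a j) * (π * π) := by group
          _ = 1 := by rw [Equiv.swap_mul_self, hsq, one_mul]
      · intro i hi
        rw [Finset.mem_sdiff, Finset.mem_insert, Finset.mem_singleton] at hi
        push_neg at hi
        obtain ⟨his, hia, hij⟩ := hi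
        have h1 : π i ≠ a := fun h => hij (π.injective (h.trans hja.symm))
        have h2 : π i ≠ j := fun h => hia (π.injective (h.trans haπ.symm))
        simp only [Equiv.Perm.mul_apply]
        rw [Equiv.swap_apply_of_ne_of_ne h1 h2]
        exact fun h => (hfpf i his) h
      · intro i hi
        rw [Finset.mem_sdiff, Finset.mem_insert, Finset.mem_singleton] at hi
        push_neg at hi
        simp only [Equiv.Perm.mul_apply]
        by_cases hia : i = a
        · subst hia; rw [haπ, Equiv.swap_apply_right]
        by_cases hij : i = j
        · subst hij; rw [hja, Equiv.swap_apply_left]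
        · have his : i ∉ s := fun h => (hi h).elim hia hij
          rw [hfix i his, Equiv.swap_apply_of_ne_of_ne hia hij]
    · have : Equiv.swap a j * (Equiv.swap a j * π) = π := by
        rw [← mul_assoc, Equiv.swap_mul_self, one_mul]
      rw [this]; exact hp
  · -- backward membership
    intro π hπ
    simp only [Finset.mem_coe, Finset.mem_filter] at hπ ⊢
    obtain ⟨hm, hp⟩ := hπ
    rw [mem_matchingsOn] at hm
    obtain ⟨hsq, hfpf, hfix⟩ := hm
    have hano : a ∉ s \ {a, j} := by simp
    have hjno : j ∉ s \ {a, j} := by simp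
    have hπa : π a = a := hfix a hano
    have hπj : π j = j := hfix j hjno
    have hcomm : Equiv.swap a j * π = π * Equiv.swap a j := by
      ext x
      simp only [Equiv.Perm.mul_apply]
      rcases eq_or_ne x a with rfl | hxa
      · rw [Equiv.swap_apply_left, hπj, hπa, Equiv.swap_apply_left]
      rcases eq_or_ne x j with rfl | hxj
      · rw [Equiv.swap_apply_right, hπa, hπj, Equiv.swap_apply_right]
      · rw [Equiv.swap_apply_of_ne_of_ne hxa hxj, Equiv.swap_apply_of_ne_of_ne]
        · exact fun h => hxa (π.injective (h.trans hπa.symm))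
        · exact fun h => hxj (π.injective (h.trans hπj.symm))
    refine ⟨?_, ?_, hp⟩
    · rw [mem_matchingsOn]
      refine ⟨?_, ?_, ?_⟩
      · calc (Equiv.swap a j * π) * (Equiv.swap a j * π)
            = Equiv.swap a j * (π * Equiv.swap a j) * π := by group
          _ = Equiv.swap a j * (Equiv.swap a j * π) * π := by rw [← hcomm]
          _ = (Equiv.swap a j * Equiv.swap a j) * (π * π) := by group
          _ = 1 := by rw [Equiv.swap_mul_self, hsq, one_mul]
      · intro i his
        simp only [Equiv.Perm.mul_apply]
        by_cases hia : i = a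
        · subst hia; rw [hπa, Equiv.swap_apply_left]; exact haj.symm
        by_cases hij : i = j
        · subst hij; rw [hπj, Equiv.swap_apply_right]; exact haj
        · have hi' : i ∈ s \ {a, j} := by
            rw [Finset.mem_sdiff]; simp [his, hia, hij]
          have h1 : π i ≠ a := fun h => hia (π.injective (h.trans hπa.symm))
          have h2 : π i ≠ j := fun h => hij (π.injective (h.trans hπj.symm))
          rw [Equiv.swap_apply_of_ne_of_ne h1 h2]
          exact hfpf i hi'
      · intro i his
        have hia : i ≠ a := fun h => his (h ▸ ha)
        have hij : i ≠ j := fun h => his (h ▸ hj)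
        have hi' : i ∉ s \ {a, j} := by
          rw [Finset.mem_sdiff]; tauto
        simp only [Equiv.Perm.mul_apply]
        rw [hfix i hi', Equiv.swap_apply_of_ne_of_ne hia hij]
    · simp only [Equiv.Perm.mul_apply]
      rw [hπa, Equiv.swap_apply_left]
  · intro π _; dsimp only; rw [← mul_assoc, Equiv.swap_mul_self, one_mul]
  · intro π _; dsimp only; rw [← mul_assoc, Equiv.swap_mul_self, one_mul]

lemma card_matchingsOn : ∀ (k : ℕ) (s : Finset (Fin m)), s.card = 2 * k →
    (matchingsOn s).card = doubleFac k := by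
  intro k
  induction k with
  | zero =>
    intro s hs
    rw [Nat.mul_zero, Finset.card_eq_zero] at hs
    subst hs
    have : matchingsOn (∅ : Finset (Fin m)) = {1} := by
      ext π
      rw [mem_matchingsOn, Finset.mem_singleton]
      constructor
      · rintro ⟨-, -, hfix⟩
        ext x
        simp [hfix x (Finset.notMem_empty x)]
      · rintro rfl
        simp
    rw [this, Finset.card_singleton, doubleFac]
    simp
  | succ k ih =>
    intro s hs
    have hpos : 0 < s.card := by omega
    obtain ⟨a, ha⟩ := Finset.card_pos.mp hpos
    have hsplit : matchingsOn s =
        (s.erase a).biUnion (fun j => (matchingsOn s).filter fun π => π a = j ∧ True) := by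
      ext π
      rw [Finset.mem_biUnion]
      constructor
      · intro hπ
        refine ⟨π a, ?_, ?_⟩
        · rw [Finset.mem_erase]
          exact ⟨(mem_matchingsOn.mp hπ).2.1 a ha, apply_mem hπ ha⟩
        · rw [Finset.mem_filter]; exact ⟨hπ, rfl, trivial⟩
      · rintro ⟨j, -, hj⟩
        exact (Finset.mem_filter.mp hj).1
    rw [hsplit, Finset.card_biUnion]
    · have hval : ∀ j ∈ s.erase a,
          ((matchingsOn s).filter fun π => π a = j ∧ True).card = doubleFac k := by
        intro j hj
        rw [Finset.mem_erase] at hj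
        rw [step s a j (Ne.symm hj.1) ha hj.2]
        have hcard : (s \ {a, j}).card = 2 * k := by
          rw [Finset.card_sdiff_of_subset]
          · rw [Finset.card_pair (Ne.symm hj.1)]; omega
          · intro x hx
            rw [Finset.mem_insert, Finset.mem_singleton] at hx
            rcases hx with rfl | rfl
            · exact ha
            · exact hj.2
        rw [Finset.filter_true_of_mem (fun _ _ => trivial)]
        exact ih _ hcard
      rw [Finset.sum_congr rfl hval, Finset.sum_const, Finset.card_erase_of_mem ha, hs]
      have h21 : 2 * (k + 1) - 1 = 2 * k + 1 := by omega
      rw [h21, smul_eq_mul, doubleFac, doubleFac, Finset.prod_range_succ]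
      ring
    · intro u hu v hv huv
      rw [Function.onFun, Finset.disjoint_left]
      intro π h1 h2
      rw [Finset.mem_filter] at h1 h2
      exact huv ((h1.2.1).symm.trans h2.2.1)

lemma exists_sorted {α : Type*} [LinearOrder α] {x y z : α} (hxy : x ≠ y) (hxz : x ≠ z)
    (hyz : y ≠ z) :
    ∃ a b c : α, c < b ∧ b < a ∧ ({a, b, c} : Finset α) = {x, y, z} := by
  rcases hxy.lt_or_gt with h1 | h1 <;> rcases hxz.lt_or_gt with h2 | h2 <;>
    rcases hyz.lt_or_gt with h3 | h3
  · exact ⟨z, y, x, h1, h3, by ext w; simp only [Finset.mem_insert, Finset.mem_singleton]; tauto⟩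
  · exact ⟨y, z, x, h2, h3, by ext w; simp only [Finset.mem_insert, Finset.mem_singleton]; tauto⟩
  · exact absurd ((h1.trans h3).trans h2) (lt_irrefl x)
  · exact ⟨y, x, z, h2, h1, by ext w; simp only [Finset.mem_insert, Finset.mem_singleton]; tauto⟩
  · exact ⟨z, x, y, h1, h2, by ext w; simp only [Finset.mem_insert, Finset.mem_singleton]; tauto⟩
  · exact absurd ((h1.trans h2).trans h3) (lt_irrefl y)
  · exact ⟨x, z, y, h3, h2, by ext w; simp only [Finset.mem_insert, Finset.mem_singleton]; tauto⟩
  · exact ⟨x, y, z, h3, h1, rfl⟩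

lemma sorted_max {α : Type*} [LinearOrder α] {a b c : α} (h1 : c < b) (h2 : b < a) :
    ∀ w ∈ ({a, b, c} : Finset α), w ≤ a := by
  intro w hw
  rw [Finset.mem_insert, Finset.mem_insert, Finset.mem_singleton] at hw
  rcases hw with rfl | rfl | rfl
  · exact le_refl w
  · exact h2.le
  · exact (h1.trans h2).le

lemma sorted_min {α : Type*} [LinearOrder α] {a b c : α} (h1 : c < b) (h2 : b < a) :
    ∀ w ∈ ({a, b, c} : Finset α), c ≤ w := by
  intro w hw
  rw [Finset.mem_insert, Finset.mem_insert, Finset.mem_singleton] at hw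
  rcases hw with rfl | rfl | rfl
  · exact (h1.trans h2).le
  · exact h1.le
  · exact le_refl w

lemma sorted_unique {α : Type*} [LinearOrder α] {a b c a' b' c' : α}
    (h1 : c < b) (h2 : b < a) (h1' : c' < b') (h2' : b' < a')
    (hset : ({a, b, c} : Finset α) = {a', b', c'}) : a = a' ∧ b = b' ∧ c = c' := by
  have hma : a ∈ ({a', b', c'} : Finset α) := hset ▸ (by simp)
  have hma' : a' ∈ ({a, b, c} : Finset α) := hset ▸ (by simp)
  have hmc : c ∈ ({a', b', c'} : Finset α) := hset ▸ (by simp)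
  have hmc' : c' ∈ ({a, b, c} : Finset α) := hset ▸ (by simp)
  have hmb : b ∈ ({a', b', c'} : Finset α) := hset ▸ (by simp)
  have haa : a = a' :=
    le_antisymm (sorted_max h1' h2' a hma) (sorted_max h1 h2 a' hma')
  have hcc : c = c' :=
    le_antisymm (sorted_min h1 h2 c' hmc') (sorted_min h1' h2' c hmc)
  refine ⟨haa, ?_, hcc⟩
  rw [Finset.mem_insert, Finset.mem_insert, Finset.mem_singleton] at hmb
  rcases hmb with h | h | h
  · exfalso; rw [h, ← haa] at h2; exact absurd h2 (lt_irrefl a)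
  · exact h
  · exfalso; rw [h, ← hcc] at h1; exact absurd h1 (lt_irrefl c)

lemma card_triples {α : Type*} [LinearOrder α] (s : Finset α) :
    ((s ×ˢ s ×ˢ s).filter fun t => t.2.2 < t.2.1 ∧ t.2.1 < t.1).card = s.card.choose 3 := by
  classical
  rw [← Finset.card_powersetCard 3 s]
  apply Finset.card_bij (fun t _ => ({t.1, t.2.1, t.2.2} : Finset α))
  · rintro ⟨a, b, c⟩ ht
    simp only [Finset.mem_filter, Finset.mem_product] at ht
    obtain ⟨⟨ha, hb, hc⟩, h1, h2⟩ := ht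
    rw [Finset.mem_powersetCard]
    constructor
    · intro w hw
      rw [Finset.mem_insert, Finset.mem_insert, Finset.mem_singleton] at hw
      rcases hw with rfl | rfl | rfl <;> assumption
    · exact Finset.card_eq_three.mpr ⟨a, b, c, h2.ne', (h1.trans h2).ne', h1.ne', rfl⟩
  · rintro ⟨a, b, c⟩ ht ⟨a', b', c'⟩ ht' heq
    simp only [Finset.mem_filter] at ht ht'
    obtain ⟨he1, he2, he3⟩ := sorted_unique ht.2.1 ht.2.2 ht'.2.1 ht'.2.2 heq
    exact Prod.ext he1 (Prod.ext he2 he3)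
  · intro u hu
    rw [Finset.mem_powersetCard] at hu
    obtain ⟨x, y, z, hxy, hxz, hyz, rfl⟩ := Finset.card_eq_three.mp hu.2
    obtain ⟨a, b, c, h1, h2, hset⟩ := exists_sorted hxy hxz hyz
    have hsub : ∀ w ∈ ({a,b,c} : Finset α), w ∈ s := fun w hw => hu.1 (hset ▸ hw)
    refine ⟨(a, b, c), ?_, hset⟩
    simp only [Finset.mem_filter, Finset.mem_product]
    exact ⟨⟨hsub a (by simp), hsub b (by simp), hsub c (by simp)⟩, h1, h2⟩

lemma count_filter_mem (s : Finset (Fin m)) (k : ℕ) (z : Fin m) (hz : z ∈ s)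
    (I : Finset (Fin m)) (hI : ∀ c ∈ I, c ∈ s ∧ c ≠ z)
    (hcard : ∀ c ∈ I, (s \ {z, c}).card = 2 * k) :
    ((matchingsOn s).filter fun π => π z ∈ I).card = I.card * doubleFac k := by
  have hsplit : (matchingsOn s).filter (fun π => π z ∈ I)
      = I.biUnion fun c => (matchingsOn s).filter fun π => π z = c ∧ True := by
    ext π
    rw [Finset.mem_filter, Finset.mem_biUnion]
    constructor
    · rintro ⟨hm, hmem⟩
      exact ⟨π z, hmem, Finset.mem_filter.mpr ⟨hm, rfl, trivial⟩⟩
    · rintro ⟨c, hc, hπ⟩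
      rw [Finset.mem_filter] at hπ
      exact ⟨hπ.1, hπ.2.1 ▸ hc⟩
  rw [hsplit, Finset.card_biUnion]
  · rw [Finset.sum_congr rfl fun c hc => ?_, Finset.sum_const, smul_eq_mul]
    rw [step s z c (hI c hc).2.symm hz (hI c hc).1]
    rw [Finset.filter_true_of_mem (fun _ _ => trivial)]
    exact card_matchingsOn k _ (hcard c hc)
  · intro u hu v hv huv
    rw [Function.onFun, Finset.disjoint_left]
    intro π h1 h2
    rw [Finset.mem_filter] at h1 h2
    exact huv ((h1.2.1).symm.trans h2.2.1)

lemma matchings_eq_matchingsOn (n : ℕ) : matchings n = matchingsOn (univ : Finset (Fin (2 * n))) := by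
  ext π
  simp [matchings, matchingsOn, IsMatching]

lemma main_count_gen {m : ℕ} (k : ℕ) (hm : m = 2 * k + 6) (X Y Z : Fin m)
    (hXY : (X : ℕ) + 1 = (Y : ℕ)) (hYZ : (Y : ℕ) + 1 = (Z : ℕ)) :
    ((matchingsOn (univ : Finset (Fin m))).filter fun π =>
        π Y < π X ∧ π Z < π Y).card
      = (2 * k + 3) * doubleFac (k + 1) + (2 * k + 3).choose 3 * doubleFac k := by
  have hZlt : (Z : ℕ) < m := Z.isLt
  have hXYne : X ≠ Y := fun h => by rw [Fin.ext_iff] at h; omega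
  have hXZne : X ≠ Z := fun h => by rw [Fin.ext_iff] at h; omega
  have hYZne : Y ≠ Z := fun h => by rw [Fin.ext_iff] at h; omega
  have hcard_univ : (univ : Finset (Fin m)).card = m := by
    rw [Finset.card_univ, Fintype.card_fin]
  -- the card of a double removal
  have card_sdiff_pair : ∀ (s : Finset (Fin m)) (a b : Fin m), a ∈ s → b ∈ s → a ≠ b →
      (s \ {a, b}).card = s.card - 2 := by
    intro s a b ha hb hab
    rw [Finset.card_sdiff_of_subset, Finset.card_pair hab]
    intro x hx
    rw [Finset.mem_insert, Finset.mem_singleton] at hx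
    rcases hx with rfl | rfl <;> assumption
  -- Part 1 : matchings with π X = Y
  have key1 : (((matchingsOn (univ : Finset (Fin m))).filter fun π =>
        π Y < π X ∧ π Z < π Y).filter fun π => π X = Y).card
      = (X : ℕ) * doubleFac (k + 1) := by
    have e1 : ((matchingsOn (univ : Finset (Fin m))).filter fun π =>
          π Y < π X ∧ π Z < π Y).filter (fun π => π X = Y)
        = (matchingsOn (univ : Finset (Fin m))).filter
            (fun π => π X = Y ∧ (π Y < π X ∧ π Z < π Y)) := by
      ext π
      simp only [Finset.mem_filter]
      tauto
    rw [e1, step univ X Y hXYne (mem_univ X) (mem_univ Y)]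
    have hZs1 : Z ∈ univ \ ({X, Y} : Finset (Fin m)) := by
      rw [Finset.mem_sdiff, Finset.mem_insert, Finset.mem_singleton]
      exact ⟨mem_univ Z, by push_neg; exact ⟨hXZne.symm, hYZne.symm⟩⟩
    have e2 : ((matchingsOn (univ \ ({X, Y} : Finset (Fin m)))).filter
          fun π => (Equiv.swap X Y * π) Y < (Equiv.swap X Y * π) X ∧
            (Equiv.swap X Y * π) Z < (Equiv.swap X Y * π) Y)
        = (matchingsOn (univ \ ({X, Y} : Finset (Fin m)))).filter
            fun π => π Z ∈ univ.filter (fun c => c < X) := by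
      apply Finset.filter_congr
      intro π hπ
      have hfix := (mem_matchingsOn.mp hπ).2.2
      have hπX : π X = X := hfix X (by simp)
      have hπY : π Y = Y := hfix Y (by simp)
      have hπZ := apply_mem hπ hZs1
      rw [Finset.mem_sdiff, Finset.mem_insert, Finset.mem_singleton] at hπZ
      push_neg at hπZ
      simp only [Equiv.Perm.mul_apply, hπX, hπY, Equiv.swap_apply_left,
        Equiv.swap_apply_right, Equiv.swap_apply_of_ne_of_ne hπZ.2.1 hπZ.2.2,
        Finset.mem_filter, Finset.mem_univ, true_and]
      have hXltY : X < Y := by rw [Fin.lt_def]; omega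
      tauto
    rw [e2, count_filter_mem _ (k + 1) Z hZs1]
    · congr 1
      have : (univ.filter fun c => c < X) = Finset.Iio X := by
        ext c; simp
      rw [this, Fin.card_Iio]
    · intro c hc
      rw [Finset.mem_filter] at hc
      have hcX : (c : ℕ) < (X : ℕ) := hc.2
      constructor
      · rw [Finset.mem_sdiff, Finset.mem_insert, Finset.mem_singleton]
        push_neg
        exact ⟨mem_univ c, fun h => by rw [Fin.ext_iff] at h; omega,
          fun h => by rw [Fin.ext_iff] at h; omega⟩
      · exact fun h => by rw [Fin.ext_iff] at h; omega
    · intro c hc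
      rw [Finset.mem_filter] at hc
      have hcX : (c : ℕ) < (X : ℕ) := hc.2
      have hZc : Z ≠ c := fun h => by rw [Fin.ext_iff] at h; omega
      rw [card_sdiff_pair _ Z c hZs1 _ hZc]
      · rw [card_sdiff_pair _ X Y (mem_univ X) (mem_univ Y) hXYne, hcard_univ]
        omega
      · rw [Finset.mem_sdiff, Finset.mem_insert, Finset.mem_singleton]
        push_neg
        exact ⟨mem_univ c, fun h => by rw [Fin.ext_iff] at h; omega,
          fun h => by rw [Fin.ext_iff] at h; omega⟩
  -- Part 2 : matchings with π Y = Z (and π X ≠ Y)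
  have key2 : ((((matchingsOn (univ : Finset (Fin m))).filter fun π =>
        π Y < π X ∧ π Z < π Y).filter fun π => ¬ π X = Y).filter fun π => π Y = Z).card
      = (m - 1 - (Z : ℕ)) * doubleFac (k + 1) := by
    have e1 : (((matchingsOn (univ : Finset (Fin m))).filter fun π =>
          π Y < π X ∧ π Z < π Y).filter fun π => ¬ π X = Y).filter (fun π => π Y = Z)
        = (matchingsOn (univ : Finset (Fin m))).filter
            (fun π => π Y = Z ∧ (π Y < π X ∧ π Z < π Y)) := by
      ext π
      simp only [Finset.mem_filter]
      constructor
      · tauto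
      · rintro ⟨hm', hYZ', hlt⟩
        refine ⟨⟨⟨hm', hlt⟩, ?_⟩, hYZ'⟩
        intro hXY'
        have hsq := (mem_matchingsOn.mp hm').1
        have : π Y = X := by rw [← hXY']; exact sq_apply hsq X
        rw [this] at hYZ'
        exact hXZne hYZ'
    rw [e1, step univ Y Z hYZne (mem_univ Y) (mem_univ Z)]
    have hXs2 : X ∈ univ \ ({Y, Z} : Finset (Fin m)) := by
      rw [Finset.mem_sdiff, Finset.mem_insert, Finset.mem_singleton]
      exact ⟨mem_univ X, by push_neg; exact ⟨hXYne, hXZne⟩⟩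
    have e2 : ((matchingsOn (univ \ ({Y, Z} : Finset (Fin m)))).filter
          fun π => (Equiv.swap Y Z * π) Y < (Equiv.swap Y Z * π) X ∧
            (Equiv.swap Y Z * π) Z < (Equiv.swap Y Z * π) Y)
        = (matchingsOn (univ \ ({Y, Z} : Finset (Fin m)))).filter
            fun π => π X ∈ univ.filter (fun c => Z < c) := by
      apply Finset.filter_congr
      intro π hπ
      have hfix := (mem_matchingsOn.mp hπ).2.2
      have hπY : π Y = Y := hfix Y (by simp)
      have hπZ : π Z = Z := hfix Z (by simp)
      have hπX := apply_mem hπ hXs2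
      rw [Finset.mem_sdiff, Finset.mem_insert, Finset.mem_singleton] at hπX
      push_neg at hπX
      simp only [Equiv.Perm.mul_apply, hπY, hπZ, Equiv.swap_apply_left,
        Equiv.swap_apply_right, Equiv.swap_apply_of_ne_of_ne hπX.2.1 hπX.2.2,
        Finset.mem_filter, Finset.mem_univ, true_and]
      have hYltZ : Y < Z := by rw [Fin.lt_def]; omega
      tauto
    rw [e2, count_filter_mem _ (k + 1) X hXs2]
    · congr 1
      have : (univ.filter fun c => Z < c) = Finset.Ioi Z := by
        ext c; simp
      rw [this, Fin.card_Ioi]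
    · intro c hc
      rw [Finset.mem_filter] at hc
      have hcZ : (Z : ℕ) < (c : ℕ) := hc.2
      constructor
      · rw [Finset.mem_sdiff, Finset.mem_insert, Finset.mem_singleton]
        push_neg
        exact ⟨mem_univ c, fun h => by rw [Fin.ext_iff] at h; omega,
          fun h => by rw [Fin.ext_iff] at h; omega⟩
      · exact fun h => by rw [Fin.ext_iff] at h; omega
    · intro c hc
      rw [Finset.mem_filter] at hc
      have hcZ : (Z : ℕ) < (c : ℕ) := hc.2
      have hXc : X ≠ c := fun h => by rw [Fin.ext_iff] at h; omega
      rw [card_sdiff_pair _ X c hXs2 _ hXc]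
      · rw [card_sdiff_pair _ Y Z (mem_univ Y) (mem_univ Z) hYZne, hcard_univ]
        omega
      · rw [Finset.mem_sdiff, Finset.mem_insert, Finset.mem_singleton]
        push_neg
        exact ⟨mem_univ c, fun h => by rw [Fin.ext_iff] at h; omega,
          fun h => by rw [Fin.ext_iff] at h; omega⟩
  -- Part 3 : matchings with π X ≠ Y, π Y ≠ Z
  have key3 : ((((matchingsOn (univ : Finset (Fin m))).filter fun π =>
        π Y < π X ∧ π Z < π Y).filter fun π => ¬ π X = Y).filter fun π => ¬ π Y = Z).card
      = (2 * k + 3).choose 3 * doubleFac k := by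
    set s3 : Finset (Fin m) := univ \ {X, Y, Z} with hs3
    have hmem_s3 : ∀ w : Fin m, w ∈ s3 ↔ w ≠ X ∧ w ≠ Y ∧ w ≠ Z := by
      intro w
      rw [hs3, Finset.mem_sdiff, Finset.mem_insert, Finset.mem_insert, Finset.mem_singleton]
      push_neg
      simp [mem_univ]
    have hsplit : (((matchingsOn (univ : Finset (Fin m))).filter fun π =>
          π Y < π X ∧ π Z < π Y).filter fun π => ¬ π X = Y).filter (fun π => ¬ π Y = Z)
        = ((s3 ×ˢ s3 ×ˢ s3).filter fun t => t.2.2 < t.2.1 ∧ t.2.1 < t.1).biUnion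
            (fun t => (matchingsOn (univ : Finset (Fin m))).filter
              fun π => π X = t.1 ∧ π Y = t.2.1 ∧ π Z = t.2.2) := by
      ext π
      simp only [Finset.mem_filter, Finset.mem_biUnion]
      constructor
      · rintro ⟨⟨⟨hm', hlt1, hlt2⟩, hne1⟩, hne2⟩
        obtain ⟨hsq, hfpf, -⟩ := mem_matchingsOn.mp hm'
        have hπXZ : π X ≠ Z := by
          intro h
          have hZX : π Z = X := by rw [← h]; exact sq_apply hsq X
          rw [h] at hlt1
          rw [hZX] at hlt2
          rw [Fin.lt_def] at hlt1 hlt2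
          have : π Y = Y := by rw [Fin.ext_iff]; omega
          exact hfpf Y (mem_univ Y) this
        have hπYX : π Y ≠ X := by
          intro h
          have : π X = Y := by rw [← h]; exact sq_apply hsq Y
          exact hne1 this
        have hπZX : π Z ≠ X := by
          intro h
          have : π X = Z := by rw [← h]; exact sq_apply hsq Z
          exact hπXZ this
        have hπZY : π Z ≠ Y := by
          intro h
          have : π Y = Z := by rw [← h]; exact sq_apply hsq Z
          exact hne2 this
        refine ⟨(π X, π Y, π Z), ?_, hm', rfl, rfl, rfl⟩
        rw [Finset.mem_product, Finset.mem_product]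
        refine ⟨⟨?_, ?_, ?_⟩, hlt2, hlt1⟩
        · exact (hmem_s3 _).mpr ⟨hfpf X (mem_univ X), hne1, hπXZ⟩
        · exact (hmem_s3 _).mpr ⟨hπYX, hfpf Y (mem_univ Y), hne2⟩
        · exact (hmem_s3 _).mpr ⟨hπZX, hπZY, hfpf Z (mem_univ Z)⟩
      · rintro ⟨⟨a, b, c⟩, ⟨htp, hcb, hba⟩, hm', hXa, hYb, hZc⟩
        rw [Finset.mem_product, Finset.mem_product] at htp
        obtain ⟨ha, hb, hc⟩ := htp
        simp only at ha hb hc hcb hba hXa hYb hZc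
        rw [hmem_s3] at ha hb
        refine ⟨⟨⟨hm', ?_, ?_⟩, ?_⟩, ?_⟩
        · rw [hXa, hYb]; exact hba
        · rw [hYb, hZc]; exact hcb
        · rw [hXa]; exact fun h => ha.2.1 h
        · rw [hYb]; exact fun h => hb.2.2 h
    rw [hsplit, Finset.card_biUnion]
    · have hpc : ∀ t ∈ (s3 ×ˢ s3 ×ˢ s3).filter fun t => t.2.2 < t.2.1 ∧ t.2.1 < t.1,
          ((matchingsOn (univ : Finset (Fin m))).filter
            fun π => π X = t.1 ∧ π Y = t.2.1 ∧ π Z = t.2.2).card = doubleFac k := by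
        rintro ⟨a, b, c⟩ ht
        rw [Finset.mem_filter, Finset.mem_product, Finset.mem_product] at ht
        obtain ⟨⟨ha, hb, hc⟩, hcb, hba⟩ := ht
        simp only at ha hb hc hcb hba
        rw [hmem_s3] at ha hb hc
        have hXa : X ≠ a := fun h => ha.1 h.symm
        rw [step univ X a hXa (mem_univ X) (mem_univ a)]
        have hYs : Y ∈ univ \ ({X, a} : Finset (Fin m)) := by
          rw [Finset.mem_sdiff, Finset.mem_insert, Finset.mem_singleton]
          push_neg
          exact ⟨mem_univ Y, hXYne.symm, fun h => ha.2.1 h.symm⟩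
        have hbs : b ∈ univ \ ({X, a} : Finset (Fin m)) := by
          rw [Finset.mem_sdiff, Finset.mem_insert, Finset.mem_singleton]
          push_neg
          exact ⟨mem_univ b, hb.1, hba.ne⟩
        have e1 : ((matchingsOn (univ \ ({X, a} : Finset (Fin m)))).filter
              fun π => (Equiv.swap X a * π) Y = b ∧ (Equiv.swap X a * π) Z = c)
            = (matchingsOn (univ \ ({X, a} : Finset (Fin m)))).filter
              fun π => π Y = b ∧ (π Z = c ∧ True) := by
          apply Finset.filter_congr
          intro π hπ
          have hπY := apply_mem hπ hYs
          have hZs : Z ∈ univ \ ({X, a} : Finset (Fin m)) := by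
            rw [Finset.mem_sdiff, Finset.mem_insert, Finset.mem_singleton]
            push_neg
            exact ⟨mem_univ Z, hXZne.symm, fun h => ha.2.2 h.symm⟩
          have hπZ := apply_mem hπ hZs
          rw [Finset.mem_sdiff, Finset.mem_insert, Finset.mem_singleton] at hπY hπZ
          push_neg at hπY hπZ
          simp only [Equiv.Perm.mul_apply,
            Equiv.swap_apply_of_ne_of_ne hπY.2.1 hπY.2.2,
            Equiv.swap_apply_of_ne_of_ne hπZ.2.1 hπZ.2.2, and_true]
        rw [e1, step _ Y b (fun h => hb.2.1 h.symm) hYs hbs]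
        have hZs2 : Z ∈ (univ \ ({X, a} : Finset (Fin m))) \ ({Y, b} : Finset (Fin m)) := by
          rw [Finset.mem_sdiff, Finset.mem_sdiff, Finset.mem_insert, Finset.mem_singleton,
            Finset.mem_insert, Finset.mem_singleton]
          push_neg
          exact ⟨⟨mem_univ Z, hXZne.symm, fun h => ha.2.2 h.symm⟩, hYZne.symm,
            fun h => hb.2.2 h.symm⟩
        have hcs2 : c ∈ (univ \ ({X, a} : Finset (Fin m))) \ ({Y, b} : Finset (Fin m)) := by
          rw [Finset.mem_sdiff, Finset.mem_sdiff, Finset.mem_insert, Finset.mem_singleton,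
            Finset.mem_insert, Finset.mem_singleton]
          push_neg
          exact ⟨⟨mem_univ c, hc.1, (hcb.trans hba).ne⟩, hc.2.1, hcb.ne⟩
        have e2 : ((matchingsOn ((univ \ ({X, a} : Finset (Fin m)))
                \ ({Y, b} : Finset (Fin m)))).filter
              fun π => (Equiv.swap Y b * π) Z = c ∧ True)
            = (matchingsOn ((univ \ ({X, a} : Finset (Fin m)))
                \ ({Y, b} : Finset (Fin m)))).filter
              fun π => π Z = c ∧ True := by
          apply Finset.filter_congr
          intro π hπ
          have hπZ := apply_mem hπ hZs2
          rw [Finset.mem_sdiff, Finset.mem_sdiff, Finset.mem_insert, Finset.mem_singleton,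
            Finset.mem_insert, Finset.mem_singleton] at hπZ
          push_neg at hπZ
          simp only [Equiv.Perm.mul_apply,
            Equiv.swap_apply_of_ne_of_ne hπZ.2.1 hπZ.2.2]
        rw [e2, step _ Z c (fun h => hc.2.2 h.symm) hZs2 hcs2,
          Finset.filter_true_of_mem (fun _ _ => trivial)]
        apply card_matchingsOn k
        rw [card_sdiff_pair _ Z c hZs2 hcs2 (fun h => hc.2.2 h.symm),
          card_sdiff_pair _ Y b hYs hbs (fun h => hb.2.1 h.symm),
          card_sdiff_pair _ X a (mem_univ X) (mem_univ a) hXa, hcard_univ]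
        omega
      have hs3card : s3.card = 2 * k + 3 := by
        rw [hs3, Finset.card_sdiff_of_subset (Finset.subset_univ _), hcard_univ]
        have h3 : ({X, Y, Z} : Finset (Fin m)).card = 3 := by
          rw [Finset.card_insert_of_notMem, Finset.card_insert_of_notMem,
            Finset.card_singleton]
          · simp [hYZne]
          · simp [hXYne, hXZne]
        rw [h3]; omega
      rw [Finset.sum_congr rfl hpc, Finset.sum_const, smul_eq_mul, card_triples, hs3card]
    · intro u hu v hv huv
      rw [Function.onFun, Finset.disjoint_left]
      intro π h1 h2
      rw [Finset.mem_filter] at h1 h2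
      refine huv (Prod.ext (h1.2.1.symm.trans h2.2.1)
        (Prod.ext (h1.2.2.1.symm.trans h2.2.2.1) (h1.2.2.2.symm.trans h2.2.2.2)))
  have t1 := Finset.card_filter_add_card_filter_not
    (s := (matchingsOn (univ : Finset (Fin m))).filter fun π => π Y < π X ∧ π Z < π Y)
    (p := fun π => π X = Y)
  have t2 := Finset.card_filter_add_card_filter_not
    (s := ((matchingsOn (univ : Finset (Fin m))).filter
        fun π => π Y < π X ∧ π Z < π Y).filter fun π => ¬ π X = Y)
    (p := fun π => π Y = Z)
  rw [← t1, ← t2, key1, key2, key3]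
  have hsum : (X : ℕ) + (m - 1 - (Z : ℕ)) = 2 * k + 3 := by omega
  rw [← add_assoc, ← add_mul, hsum]

theorem stmt4 (n : ℕ) (hn : 3 ≤ n) (i : ℕ) (h1 : 1 ≤ i) (h2 : i ≤ 2 * n - 2) :
    (((matchings n).filter fun π =>
        π ⟨i, by omega⟩ < π ⟨i - 1, by omega⟩ ∧
        π ⟨i + 1, by omega⟩ < π ⟨i, by omega⟩).card : ℚ)
      = ((n : ℚ) + 1) / (3 * (2 * n - 1)) * doubleFac n := by
  obtain ⟨p, rfl⟩ : ∃ p, n = p + 3 := ⟨n - 3, by omega⟩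
  obtain ⟨j, rfl⟩ : ∃ j, i = j + 1 := ⟨i - 1, by omega⟩
  have hcount := main_count_gen (m := 2 * (p + 3)) p (by ring)
    ⟨j + 1 - 1, by omega⟩ ⟨j + 1, by omega⟩ ⟨j + 1 + 1, by omega⟩ rfl rfl
  rw [matchings_eq_matchingsOn, hcount]
  have hD1 : doubleFac (p + 1) = doubleFac p * (2 * p + 1) := by
    rw [doubleFac, doubleFac, Finset.prod_range_succ]
  have hD3 : doubleFac (p + 3) = doubleFac p * ((2 * p + 1) * (2 * p + 3) * (2 * p + 5)) := by
    rw [doubleFac, doubleFac, Finset.prod_range_succ, Finset.prod_range_succ,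
      Finset.prod_range_succ]
    ring
  have hC : (2 * p + 3).choose 3 * 6 = (2 * p + 3) * (2 * p + 2) * (2 * p + 1) := by
    have hdf : (2 * p + 3).descFactorial 3 = (2 * p + 3) * (2 * p + 2) * (2 * p + 1) := by
      rw [Nat.descFactorial_succ, Nat.descFactorial_succ, Nat.descFactorial_succ,
        Nat.descFactorial_zero]
      have e1 : 2 * p + 3 - 1 = 2 * p + 2 := by omega
      have e2 : 2 * p + 3 - 2 = 2 * p + 1 := by omega
      have e0 : 2 * p + 3 - 0 = 2 * p + 3 := by omega
      rw [e0, e1, e2]; ring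
    rw [Nat.descFactorial_eq_factorial_mul_choose] at hdf
    rw [← hdf, show (3:ℕ).factorial = 6 from rfl]
    ring
  have hCq : (((2 * p + 3).choose 3 : ℕ) : ℚ) = ((2 * p + 3) * (2 * p + 2) * (2 * p + 1) : ℚ) / 6 := by
    rw [eq_div_iff (by norm_num : (6 : ℚ) ≠ 0)]
    exact_mod_cast hC
  rw [hD3, hD1]
  push_cast [hCq]
  have h5 : (2 * ((p : ℚ) + 3) - 1) ≠ 0 := by
    have : (2 * ((p : ℚ) + 3) - 1) = 2 * p + 5 := by ring
    rw [this]; positivity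
  field_simp
  ring
end

section
/- For n \geq 3, the identity (2n-3) F_{2n-4} + \binom{2n-3}{3} F_{2n-6} = \frac{n+1}{3(2n-1)} F_{2n} holds, where F_{2k} = (2k-1)!!. -/
open Finset

lemma c2q (k : ℕ) : (((k+2).choose 2 : ℕ) : ℚ) = (k+2)*(k+1)/2 := by
  induction k with
  | zero => norm_num
  | succ k ih =>
    have : k+1+2 = (k+2)+1 := rfl
    rw [this, Nat.choose_succ_succ, Nat.choose_one_right]
    push_cast
    push_cast at ih
    linear_combination ih

lemma c3q (k : ℕ) : (((k+3).choose 3 : ℕ) : ℚ) = (k+3)*(k+2)*(k+1)/6 := by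
  induction k with
  | zero => norm_num
  | succ k ih =>
    have : k+1+3 = (k+3)+1 := rfl
    rw [this, Nat.choose_succ_succ]
    have h2 := c2q (k+1)
    push_cast at h2 ih ⊢
    linear_combination ih + h2

theorem stmt6 (n : ℕ) (hn : 3 ≤ n) :
    ((2 * n - 3 : ℕ) : ℚ) * doubleFac (n - 2)
        + (Nat.choose (2 * n - 3) 3 : ℚ) * doubleFac (n - 3)
      = ((n : ℚ) + 1) / (3 * (2 * n - 1)) * doubleFac n := by
  obtain ⟨m, rfl⟩ := Nat.exists_eq_add_of_le hn
  have e1 : 2 * (3 + m) - 3 = 2*m + 3 := by omega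
  have e2 : 3 + m - 2 = m + 1 := by omega
  have e3 : 3 + m - 3 = m := by omega
  have e4 : 3 + m = m + 3 := by omega
  rw [e1, e2, e3, e4]
  have h1 : doubleFac (m+1) = doubleFac m * (2*m+1) := Finset.prod_range_succ _ m
  have h2 : doubleFac (m+2) = doubleFac (m+1) * (2*(m+1)+1) := Finset.prod_range_succ _ (m+1)
  have h3 : doubleFac (m+3) = doubleFac (m+2) * (2*(m+2)+1) := Finset.prod_range_succ _ (m+2)
  have hc := c3q (2*m)
  have : (2*m+3:ℕ) = 2*m+3 := rfl
  rw [h3, h2, h1]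
  rw [show (2*m+3 : ℕ).choose 3 = ((2*m)+3).choose 3 from rfl, hc]
  have hpos : (0:ℚ) < 2 * ((m:ℚ)+3) - 1 := by
    have := Nat.cast_nonneg (α := ℚ) m; linarith
  push_cast
  field_simp [hpos.ne']
  ring
end

section
/- For n \geq 4, the identity 2 F_{2n-4} + 4 \binom{2n-4}{2} F_{2n-6} + 6 \binom{2n-4}{4} F_{2n-8} = \frac{n(n-1)}{(2n-1)(2n-3)} F_{2n} holds, where F_{2k} = (2k-1)!!. -/
open Finset

theorem stmt7 (n : ℕ) (hn : 4 ≤ n) :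
    2 * (doubleFac (n - 2) : ℚ) + 4 * (Nat.choose (2 * n - 4) 2 : ℚ) * doubleFac (n - 3)
        + 6 * (Nat.choose (2 * n - 4) 4 : ℚ) * doubleFac (n - 4)
      = ((n : ℚ) * (n - 1)) / ((2 * n - 1) * (2 * n - 3)) * doubleFac n := by
  obtain ⟨m, rfl⟩ : ∃ m, n = m + 4 := ⟨n - 4, by omega⟩
  have e1 : m + 4 - 2 = m + 2 := by omega
  have e2 : m + 4 - 3 = m + 1 := by omega
  have e3 : m + 4 - 4 = m := by omega
  have e4 : 2 * (m + 4) - 4 = 2 * m + 4 := by omega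
  rw [e1, e2, e3, e4]
  have d1 : (doubleFac (m + 1) : ℚ) = doubleFac m * (2 * m + 1) := by
    simp [doubleFac, Finset.prod_range_succ]; (try push_cast); try ring
  have d2 : (doubleFac (m + 2) : ℚ) = doubleFac m * ((2 * m + 1) * (2 * m + 3)) := by
    simp [doubleFac, Finset.prod_range_succ]; (try push_cast); try ring
  have d4 : (doubleFac (m + 4) : ℚ) = doubleFac m *
      ((2 * m + 1) * (2 * m + 3) * (2 * m + 5) * (2 * m + 7)) := by
    simp [doubleFac, Finset.prod_range_succ]; (try push_cast); try ring
  have c2 : ((2 * m + 4).choose 2 : ℚ) = (2 * m + 4) * (2 * m + 3) / 2 := by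
    rw [Nat.cast_choose_two]; push_cast; ring
  have c4 : (24 : ℚ) * ((2 * m + 4).choose 4 : ℚ)
      = (2 * m + 4) * (2 * m + 3) * (2 * m + 2) * (2 * m + 1) := by
    have := Nat.descFactorial_eq_factorial_mul_choose (2 * m + 4) 4
    have h2 : (2 * m + 4).descFactorial 4 = (2*m+4)*(2*m+3)*(2*m+2)*(2*m+1) := by
      simp [Nat.descFactorial]; ring
    rw [h2] at this
    have := congrArg (fun x : ℕ => (x : ℚ)) this
    push_cast at this ⊢
    rw [this]; norm_num [Nat.factorial]
  have h5 : ((2 : ℚ) * (m + 4) - 1) = 2 * m + 7 := by ring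
  have h6 : ((2 : ℚ) * (m + 4) - 3) = 2 * m + 5 := by ring
  rw [d1, d2, d4, c2]
  push_cast
  have hd : ((2:ℚ) * ((m:ℚ) + 4) - 1) * (2 * ((m:ℚ) + 4) - 3) = (2*m+7)*(2*m+5) := by ring
  rw [div_mul_eq_mul_div, hd, eq_div_iff (by positivity)]
  nlinarith [c4, sq_nonneg ((m:ℚ)), sq_nonneg ((doubleFac m : ℚ))]
end

section
/- For every real s > 0 and natural number n \geq 1, \frac{(s/\sqrt{n})^{2n+1}}{(2n)!} \sum_{k=0}^\infty \big( \prod_{j=0}^{n-1} (k^2 + k + 2j) \big) e^{-ks/\sqrt{n}} \geq e^{-s/\sqrt{n}}. -/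
open Finset

open MeasureTheory Filter

lemma aux_union : (⋃ k : ℕ, Set.Ioc (k:ℝ) (k+1)) = Set.Ioi 0 := by
  ext t
  simp only [Set.mem_iUnion, Set.mem_Ioc, Set.mem_Ioi]
  constructor
  · rintro ⟨k, hk1, _⟩
    exact lt_of_le_of_lt (by positivity) hk1
  · intro ht
    have h1 : 1 ≤ ⌈t⌉₊ := Nat.one_le_ceil_iff.mpr ht
    refine ⟨⌈t⌉₊ - 1, ?_, ?_⟩
    · by_contra h
      push_neg at h
      have := Nat.ceil_le.mpr h
      omega
    · rw [Nat.cast_sub h1, Nat.cast_one, sub_add_cancel]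
      exact Nat.le_ceil t

lemma aux_disj : Pairwise (Function.onFun Disjoint fun k : ℕ => Set.Ioc (k:ℝ) (k+1)) := by
  intro i j hij
  simp only [Function.onFun]
  rw [Set.Ioc_disjoint_Ioc]
  rcases lt_or_gt_of_ne hij with h | h
  · exact min_le_of_left_le (le_max_of_le_right (by exact_mod_cast h))
  · exact min_le_of_right_le (le_max_of_le_left (by exact_mod_cast h))

lemma aux_summable_g {x : ℝ} (hx : 0 < x) (m : ℕ) :
    Summable (fun k : ℕ => (k:ℝ) ^ m * Real.exp (-(k * x))) := by
  have hr : ‖Real.exp (-x)‖ < 1 := by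
    rw [Real.norm_eq_abs, abs_of_pos (Real.exp_pos _), Real.exp_lt_one_iff]
    linarith
  have := summable_pow_mul_geometric_of_norm_lt_one (R := ℝ) m hr
  refine this.congr fun k => ?_
  rw [← Real.exp_nat_mul]
  ring_nf

lemma aux_key {x : ℝ} (hx : 0 < x) (n : ℕ) (hn : 1 ≤ n) :
    Real.exp (-x) * ((2 * n).factorial / x ^ (2 * n + 1))
      ≤ ∑' k : ℕ, (k:ℝ) ^ (2 * n) * Real.exp (-(k * x)) := by
  set f : ℝ → ℝ := fun t => t ^ (2 * n) * Real.exp (-(x * t)) with hf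
  have hcont : Continuous f := by fun_prop
  -- integrability
  have hint : IntegrableOn f (Set.Ioi 0) := by
    apply integrable_of_isBigO_exp_neg (b := x / 2) (by positivity) hcont.continuousOn
    have h0 : Tendsto (fun t : ℝ => t ^ ((2 * n : ℕ) : ℝ) * Real.exp (-(x/2) * t)) atTop (nhds 0) :=
      tendsto_rpow_mul_exp_neg_mul_atTop_nhds_zero _ _ (by positivity)
    rw [Asymptotics.isBigO_iff]
    refine ⟨1, ?_⟩
    filter_upwards [h0.eventually_le_const one_pos, eventually_ge_atTop (0:ℝ)] with t h1 h2
    have ht : (0:ℝ) ≤ t := h2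
    have hrw : f t = (t ^ ((2 * n : ℕ) : ℝ) * Real.exp (-(x/2) * t)) * Real.exp (-(x/2) * t) := by
      rw [Real.rpow_natCast, hf]
      simp only []
      rw [mul_assoc, ← Real.exp_add]
      ring_nf
    rw [hrw, Real.norm_eq_abs, Real.norm_eq_abs, abs_of_nonneg (Real.exp_nonneg _), one_mul]
    rw [abs_mul, abs_of_nonneg (Real.exp_nonneg _)]
    have h3 : |t ^ ((2 * n : ℕ) : ℝ) * Real.exp (-(x/2) * t)| ≤ 1 := by
      rw [abs_of_nonneg (by positivity)]
      exact h1
    nlinarith [Real.exp_nonneg (-(x/2) * t), abs_nonneg (t ^ ((2 * n : ℕ) : ℝ) * Real.exp (-(x/2) * t))]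
  -- integral value
  have hval : ∫ t in Set.Ioi (0:ℝ), f t = (2 * n).factorial / x ^ (2 * n + 1) := by
    have := Real.integral_rpow_mul_exp_neg_mul_Ioi (a := (2 * n + 1 : ℝ)) (r := x)
      (by positivity) hx
    rw [show (2 * n + 1 : ℝ) - 1 = ((2 * n : ℕ) : ℝ) by push_cast; ring] at this
    simp_rw [Real.rpow_natCast] at this
    rw [hf]
    simp only []
    rw [this, show (2 * n + 1 : ℝ) = ((2 * n : ℕ) : ℝ) + 1 by push_cast; ring,
      Real.Gamma_nat_eq_factorial]
    rw [show ((2 * n : ℕ) : ℝ) + 1 = ((2 * n + 1 : ℕ) : ℝ) by push_cast; ring,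
      Real.rpow_natCast, one_div, inv_pow, inv_mul_eq_div]
  -- decompose
  have hsum : HasSum (fun k : ℕ => ∫ t in Set.Ioc (k:ℝ) (k+1), f t) (∫ t in Set.Ioi (0:ℝ), f t) := by
    rw [← aux_union]
    exact MeasureTheory.hasSum_integral_iUnion (fun _ => measurableSet_Ioc) aux_disj
      (aux_union ▸ hint)
  have hsum2 : HasSum (fun k : ℕ => Real.exp (-x) * ∫ t in Set.Ioc (k:ℝ) (k+1), f t)
      (Real.exp (-x) * ((2 * n).factorial / x ^ (2 * n + 1))) := by
    rw [← hval]; exact hsum.mul_left _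
  rw [← hsum2.tsum_eq]
  -- termwise bound
  refine Summable.tsum_le_tsum_of_inj (fun k => k + 1) (add_left_injective 1)
    (fun c _ => by positivity) (fun k => ?_) hsum2.summable (aux_summable_g hx _)
  have hle : ∀ t ∈ Set.Ioc (k:ℝ) (k+1), f t ≤ ((k:ℝ)+1) ^ (2 * n) * Real.exp (-(x * k)) := by
    rintro t ⟨ht1, ht2⟩
    have ht0 : (0:ℝ) ≤ t := le_of_lt (lt_of_le_of_lt (by positivity) ht1)
    exact mul_le_mul (pow_le_pow_left₀ ht0 ht2 _)
      (Real.exp_le_exp.mpr (by nlinarith)) (Real.exp_nonneg _) (by positivity)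
  have hb : ∫ t in Set.Ioc (k:ℝ) (k+1), f t ≤ ((k:ℝ)+1) ^ (2 * n) * Real.exp (-(x * k)) := by
    calc ∫ t in Set.Ioc (k:ℝ) (k+1), f t
        ≤ ∫ _ in Set.Ioc (k:ℝ) (k+1), ((k:ℝ)+1) ^ (2 * n) * Real.exp (-(x * k)) :=
          setIntegral_mono_on (hcont.integrableOn_Ioc)
            (integrableOn_const (by rw [Real.volume_Ioc]; exact ENNReal.ofReal_ne_top))
            measurableSet_Ioc hle
      _ = ((k:ℝ)+1) ^ (2 * n) * Real.exp (-(x * k)) := by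
          rw [setIntegral_const, Real.volume_real_Ioc, show (k:ℝ) + 1 - k = 1 by ring]
          simp
  calc Real.exp (-x) * ∫ t in Set.Ioc (k:ℝ) (k+1), f t
      ≤ Real.exp (-x) * (((k:ℝ)+1) ^ (2 * n) * Real.exp (-(x * k))) :=
        mul_le_mul_of_nonneg_left hb (Real.exp_nonneg _)
    _ = ((k+1 : ℕ):ℝ) ^ (2 * n) * Real.exp (-(((k+1:ℕ):ℝ) * x)) := by
        push_cast
        rw [show -(((k:ℝ) + 1) * x) = -x + -(x * k) by ring, Real.exp_add]
        ring

theorem stmt15 (n : ℕ) (hn : 1 ≤ n) (s : ℝ) (hs : 0 < s) :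
    (s / Real.sqrt n) ^ (2 * n + 1) / (Nat.factorial (2 * n) : ℝ)
        * ∑' k : ℕ, (∏ j ∈ Finset.range n, ((k : ℝ) ^ 2 + k + 2 * j))
            * Real.exp (-(k * s) / Real.sqrt n)
      ≥ Real.exp (-s / Real.sqrt n) := by
  have hsn : (0:ℝ) < Real.sqrt n :=
    Real.sqrt_pos.mpr (by exact_mod_cast Nat.succ_le_iff.mp hn)
  set x := s / Real.sqrt n with hxdef
  have hx : 0 < x := div_pos hs hsn
  have hrw : (∑' k : ℕ, (∏ j ∈ Finset.range n, ((k : ℝ) ^ 2 + k + 2 * j))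
      * Real.exp (-(k * s) / Real.sqrt n))
      = ∑' k : ℕ, (∏ j ∈ Finset.range n, ((k : ℝ) ^ 2 + k + 2 * j))
      * Real.exp (-(k * x)) := by
    refine tsum_congr fun k => ?_
    congr 1
    rw [hxdef]
    field_simp
  rw [hrw, show -s / Real.sqrt n = -x by rw [hxdef]; ring]
  -- summability of the big series
  have S1 := aux_summable_g hx (2 * n)
  have S2 : Summable (fun k : ℕ => ((k + 1 : ℕ):ℝ) ^ (2 * n)
      * Real.exp (-((k + 1 : ℕ) * x))) := (summable_nat_add_iff 1).mpr S1
  have hexp1 : Real.exp x * Real.exp (-x) = 1 := by rw [← Real.exp_add]; simp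
  have S3 : Summable (fun k : ℕ => ((k:ℝ) + 1) ^ (2 * n) * Real.exp (-(k * x))) := by
    apply Summable.congr (S2.mul_left (Real.exp x))
    intro k
    push_cast
    rw [show -((((k:ℝ)) + 1) * x) = -((k:ℝ) * x) + -x by ring, Real.exp_add]
    linear_combination (((k:ℝ) + 1) ^ (2 * n) * Real.exp (-((k:ℝ) * x))) * hexp1
  set D : ℝ := ∏ j ∈ Finset.range n, (2 * (j:ℝ) + 1) with hD
  have hsummBig : Summable (fun k : ℕ => (∏ j ∈ Finset.range n, ((k : ℝ) ^ 2 + k + 2 * j))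
      * Real.exp (-(k * x))) := by
    apply Summable.of_nonneg_of_le (fun k => by positivity) ?_ (S3.mul_left D)
    intro k
    rw [← mul_assoc]
    apply mul_le_mul_of_nonneg_right ?_ (Real.exp_nonneg _)
    have : D * ((k:ℝ) + 1) ^ (2 * n)
        = ∏ j ∈ Finset.range n, ((2 * (j:ℝ) + 1) * ((k:ℝ) + 1) ^ 2) := by
      rw [Finset.prod_mul_distrib, ← hD, Finset.prod_const, Finset.card_range, ← pow_mul]
    rw [this]
    refine Finset.prod_le_prod (fun j _ => by positivity) (fun j _ => ?_)
    have hk : (0:ℝ) ≤ (k:ℝ) := Nat.cast_nonneg k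
    have hj : (0:ℝ) ≤ (j:ℝ) := Nat.cast_nonneg j
    nlinarith [mul_nonneg hj (sq_nonneg (k:ℝ)), mul_nonneg hj hk]
  -- termwise lower bound by k^(2n)
  have hT : (∑' k : ℕ, (k:ℝ) ^ (2 * n) * Real.exp (-(k * x)))
      ≤ ∑' k : ℕ, (∏ j ∈ Finset.range n, ((k : ℝ) ^ 2 + k + 2 * j))
        * Real.exp (-(k * x)) := by
    refine Summable.tsum_le_tsum (fun k => ?_) (aux_summable_g hx _) hsummBig
    apply mul_le_mul_of_nonneg_right ?_ (Real.exp_nonneg _)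
    calc (k:ℝ) ^ (2 * n) = ∏ _j ∈ Finset.range n, (k:ℝ) ^ 2 := by
          rw [Finset.prod_const, Finset.card_range, ← pow_mul]
      _ ≤ ∏ j ∈ Finset.range n, ((k : ℝ) ^ 2 + k + 2 * j) := by
          refine Finset.prod_le_prod (fun j _ => by positivity) (fun j _ => ?_)
          have hk : (0:ℝ) ≤ (k:ℝ) := Nat.cast_nonneg k
          have hj : (0:ℝ) ≤ (j:ℝ) := Nat.cast_nonneg j
          linarith
  rw [ge_iff_le]
  have hfac : (0:ℝ) < ((2 * n).factorial : ℝ) := by exact_mod_cast (2 * n).factorial_pos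
  calc Real.exp (-x)
      = x ^ (2 * n + 1) / ((2 * n).factorial : ℝ)
        * (Real.exp (-x) * (((2 * n).factorial : ℝ) / x ^ (2 * n + 1))) := by
        field_simp
    _ ≤ x ^ (2 * n + 1) / ((2 * n).factorial : ℝ)
        * ∑' k : ℕ, (∏ j ∈ Finset.range n, ((k : ℝ) ^ 2 + k + 2 * j))
          * Real.exp (-(k * x)) := by
        apply mul_le_mul_of_nonneg_left (le_trans (aux_key hx n hn) hT) (by positivity)
end
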